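/- Let κ ≥ 0 be an integer, let r' ≥ 3 be an odd integer, set r = 2^κ · r', let N be a positive integer with r < N, let n be a positive integer with N² ≤ 2^n, and let m be a positive integer with 2^n/r − 1 ≤ m ≤ 2^n/r + 1. Then for every integer j with 1 ≤ j ≤ (r'−1)/2, sin²(π·m·r·(j/r')/2^n) ≥ sin²(π·j/r' − π·j/2^{n−κ}). -/

import Mathlib

open Real

lemma sin_le_sin_aux (L x : ℝ) (h0 : 0 ≤ L) (h1 : L ≤ x) (h2 : x ≤ π - L) :
    Real.sin L ≤ Real.sin x := by
  have hpi := Real.pi_pos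
  rcases le_total x (π / 2) with h | h
  · refine Real.strictMonoOn_sin.monotoneOn ?_ ?_ h1
    · constructor <;> nlinarith
    · constructor <;> nlinarith
  · rw [← Real.sin_pi_sub x]
    refine Real.strictMonoOn_sin.monotoneOn ?_ ?_ (by linarith)
    · constructor <;> nlinarith
    · constructor <;> nlinarith

theorem stmt_11 (κ r' n N m : ℕ) (hr'3 : 3 ≤ r') (hodd : Odd r')
    (r : ℕ) (hr : r = 2 ^ κ * r') (hN : 0 < N) (hrN : r < N)
    (hn : 0 < n) (hN2 : N ^ 2 ≤ 2 ^ n) (hm : 0 < m)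
    (hm1 : (2 : ℝ) ^ n / r - 1 ≤ m) (hm2 : (m : ℝ) ≤ 2 ^ n / r + 1)
    (j : ℕ) (hj1 : 1 ≤ j) (hj2 : j ≤ (r' - 1) / 2) :
    Real.sin (π * m * r * ((j : ℝ) / r') / 2 ^ n) ^ 2 ≥
      Real.sin (π * j / r' - π * j / (2 : ℝ) ^ ((n : ℤ) - κ)) ^ 2 := by
  have hpi := Real.pi_pos
  have hr'R : (3:ℝ) ≤ r' := by exact_mod_cast hr'3
  have hr'0 : (0:ℝ) < r' := by linarith
  have hjR : (1:ℝ) ≤ j := by exact_mod_cast hj1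
  have h2n : (0:ℝ) < 2 ^ n := by positivity
  have h2κ : (0:ℝ) < 2 ^ κ := by positivity
  have hrR : (r:ℝ) = 2 ^ κ * r' := by rw [hr]; push_cast; ring
  have hr0 : (0:ℝ) < r := by rw [hrR]; positivity
  -- r < N ≤ N^2 ≤ 2^n
  have hrn : (r:ℝ) < 2 ^ n := by
    have h1 : (r:ℝ) < N := by exact_mod_cast hrN
    have h2 : (N:ℝ)^2 ≤ 2 ^ n := by exact_mod_cast hN2
    have hN1 : (1:ℝ) ≤ N := by exact_mod_cast hN
    nlinarith
  -- 2j ≤ r' - 1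
  have h2j : (2:ℝ) * j ≤ (r':ℝ) - 1 := by
    obtain ⟨k, hk⟩ := hodd
    have h : 2 * j + 1 ≤ r' := by omega
    have := (Nat.cast_le (α := ℝ)).mpr h
    push_cast at this
    linarith
  -- rewrite the zpow
  have hz : (2:ℝ) ^ ((n:ℤ) - κ) = 2 ^ n / 2 ^ κ := by
    rw [zpow_sub₀ (two_ne_zero), zpow_natCast, zpow_natCast]
  set a : ℝ := π * j / r' with ha
  set e : ℝ := π * j * r / (r' * 2 ^ n) with he
  have hRHSangle : π * j / r' - π * j / (2:ℝ) ^ ((n:ℤ) - κ) = a - e := by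
    rw [hz, ha, he, hrR]
    field_simp
  set x : ℝ := π * m * r * ((j:ℝ) / r') / 2 ^ n with hx
  have he0 : 0 ≤ e := by positivity
  have hea : e ≤ a := by
    rw [he, ha, div_le_div_iff₀ (by positivity) (by positivity)]
    have h := hrn.le
    nlinarith [mul_le_mul_of_nonneg_left hrn.le (by positivity : (0:ℝ) ≤ π * j * r')]
  have ha0 : 0 < a := by positivity
  -- key bounds on x
  have hmr1 : (2:ℝ) ^ n - r ≤ m * r := by
    have := mul_le_mul_of_nonneg_right hm1 (le_of_lt hr0)
    rw [sub_mul, div_mul_cancel₀ _ (ne_of_gt hr0), one_mul] at this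
    linarith
  have hmr2 : (m:ℝ) * r ≤ 2 ^ n + r := by
    have := mul_le_mul_of_nonneg_right hm2 (le_of_lt hr0)
    rw [add_mul, div_mul_cancel₀ _ (ne_of_gt hr0), one_mul] at this
    linarith
  have hxeq : x = π * j * (m * r) / (r' * 2 ^ n) := by
    rw [hx]; field_simp
  have haeq : a - e = π * j * (2 ^ n - r) / (r' * 2 ^ n) := by
    rw [ha, he]; field_simp
  have haeq2 : a + e = π * j * (2 ^ n + r) / (r' * 2 ^ n) := by
    rw [ha, he]; field_simp
  have hx1 : a - e ≤ x := by
    rw [hxeq, haeq]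
    gcongr
  have hx2 : x ≤ a + e := by
    rw [hxeq, haeq2]
    gcongr
  have h2a : 2 * a ≤ π := by
    rw [ha, mul_div_assoc', div_le_iff₀ hr'0]
    have := mul_le_mul_of_nonneg_left h2j hpi.le
    linarith
  have hL0 : 0 ≤ a - e := by linarith
  have hxπ : x ≤ π - (a - e) := by linarith
  have hsin : Real.sin (a - e) ≤ Real.sin x :=
    sin_le_sin_aux _ _ hL0 hx1 hxπ
  have hsinL0 : 0 ≤ Real.sin (a - e) :=
    Real.sin_nonneg_of_nonneg_of_le_pi hL0 (by linarith)
  have hsinx0 : 0 ≤ Real.sin x :=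
    Real.sin_nonneg_of_nonneg_of_le_pi (by linarith) (by linarith)
  rw [ge_iff_le, hRHSangle]
  exact sq_le_sq' (by linarith) hsin
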